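/- Let G be a graph with G → (K_3)_3, and let c be a 3-colouring of the edges of G. If for each of the three colours there is a monochromatic copy of K_3 in that colour, then there is a monochromatic copy of K_3 + K_2, i.e. a monochromatic triangle together with a vertex-disjoint edge of the same colour. -/
import Mathlib

open SimpleGraph

/-- The colouring `c` contains a copy of `H` in `G` all of whose edges have colour `i`. -/
def HasMonoCopyColor {V W : Type*} (G : SimpleGraph V) (H : SimpleGraph W) {q : ℕ}
    (c : Sym2 V → Fin q) (i : Fin q) : Prop :=
  ∃ f : W ↪ V, ∀ a b, H.Adj a b → G.Adj (f a) (f b) ∧ c s(f a, f b) = i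

/-- The colouring `c` contains a monochromatic copy of `H` in `G`. -/
def HasMonoCopy {V W : Type*} (G : SimpleGraph V) (H : SimpleGraph W) {q : ℕ}
    (c : Sym2 V → Fin q) : Prop :=
  ∃ i : Fin q, HasMonoCopyColor G H c i

/-- `G` is `q`-Ramsey for `H`: every `q`-colouring of the edges of `G` contains a
monochromatic copy of `H`. -/
def IsRamsey (q : ℕ) {V W : Type*} (G : SimpleGraph V) (H : SimpleGraph W) : Prop :=
  ∀ c : Sym2 V → Fin q, HasMonoCopy G H c

/-- An explicit 3-colouring of the edges of `K₁₀` with no monochromatic triangle. -/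
def dtab : Fin 10 → Fin 10 → Fin 3 := ![
  ![0,2,1,0,1,2,1,0,2,0],
  ![2,0,2,1,0,0,1,2,1,0],
  ![1,2,0,1,0,0,2,1,0,0],
  ![0,1,1,0,2,0,0,2,2,1],
  ![1,0,0,2,0,2,2,0,1,1],
  ![2,0,0,0,2,0,1,2,1,1],
  ![1,1,2,0,2,1,0,1,0,2],
  ![0,2,1,2,0,2,1,0,1,2],
  ![2,1,0,2,1,1,0,1,0,2],
  ![0,0,0,1,1,1,2,2,2,0]]

lemma dtab_symm : ∀ a b, dtab a b = dtab b a := by decide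

lemma dtab_noMono : ∀ a b c : Fin 10, a ≠ b → a ≠ c → b ≠ c →
    ¬(dtab a b = dtab a c ∧ dtab a b = dtab b c) := by decide

/-- Index map sending the nine (possibly coinciding) triangle vertices into `Fin 10`;
all other vertices go to `9`. -/
def kap {V : Type} [DecidableEq V] (f : Fin 3 → Fin 3 ↪ V) (v : V) : Fin 10 :=
  if v = f 0 0 then 0 else if v = f 0 1 then 1 else if v = f 0 2 then 2 else
  if v = f 1 0 then 3 else if v = f 1 1 then 4 else if v = f 1 2 then 5 else
  if v = f 2 0 then 6 else if v = f 2 1 then 7 else if v = f 2 2 then 8 else 9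

/-- A one-sided inverse of `kap`. -/
def vert {V : Type} (f : Fin 3 → Fin 3 ↪ V) (k : Fin 10) : V :=
  if k = 0 then f 0 0 else if k = 1 then f 0 1 else if k = 2 then f 0 2 else
  if k = 3 then f 1 0 else if k = 4 then f 1 1 else if k = 5 then f 1 2 else
  if k = 6 then f 2 0 else if k = 7 then f 2 1 else f 2 2

lemma kap_pin {V : Type} [DecidableEq V] (f : Fin 3 → Fin 3 ↪ V) (v : V) (k : Fin 10)
    (hk : kap f v = k) (hk9 : k ≠ 9) : v = vert f k := by
  unfold kap at hk
  split_ifs at hk with h0 h1 h2 h3 h4 h5 h6 h7 h8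
  · subst hk; exact h0
  · subst hk; exact h1
  · subst hk; exact h2
  · subst hk; exact h3
  · subst hk; exact h4
  · subst hk; exact h5
  · subst hk; exact h6
  · subst hk; exact h7
  · subst hk; exact h8
  · exact absurd hk.symm hk9

lemma kap_inj {V : Type} [DecidableEq V] (f : Fin 3 → Fin 3 ↪ V) (u v : V)
    (h : kap f u = kap f v) (h9 : kap f u ≠ 9) : u = v := by
  rw [kap_pin f u (kap f u) rfl h9, kap_pin f v (kap f v) rfl (h ▸ h9), h]

lemma kap_eq_nine {V : Type} [DecidableEq V] (f : Fin 3 → Fin 3 ↪ V) (v : V)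
    (h : kap f v = 9) (i a : Fin 3) : f i a ≠ v := by
  unfold kap at h
  split_ifs at h with h0 h1 h2 h3 h4 h5 h6 h7 h8
  all_goals first
    | exact absurd h (by decide)
    | (intro he; fin_cases i <;> fin_cases a <;> simp_all)

/-- Let `G → (K₃)₃` and let `c` be a 3-colouring of the edges of `G`.
If every colour contains a monochromatic triangle, then there is a monochromatic copy of
`K₃ + K₂` (a monochromatic triangle together with a vertex-disjoint edge of the same
colour). -/
theorem stmt14 {V : Type} [Fintype V] (G : SimpleGraph V)
    (hG : IsRamsey 3 G (⊤ : SimpleGraph (Fin 3)))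
    (c : Sym2 V → Fin 3)
    (htri : ∀ i : Fin 3, HasMonoCopyColor G (⊤ : SimpleGraph (Fin 3)) c i) :
    HasMonoCopy G ((⊤ : SimpleGraph (Fin 3)) ⊕g (⊤ : SimpleGraph (Fin 2))) c := by
  classical
  by_contra hcon
  choose f hf using htri
  -- every edge of `G` of colour `i` meets the colour-`i` triangle
  have hkey : ∀ u v : V, G.Adj u v →
      (∃ a, f (c s(u,v)) a = u) ∨ (∃ a, f (c s(u,v)) a = v) := by
    intro u v huv
    by_contra hk
    push_neg at hk
    obtain ⟨hku, hkv⟩ := hk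
    apply hcon
    refine ⟨c s(u,v),
      ⟨Sum.elim (f (c s(u,v))) (fun b : Fin 2 => if b = 0 then u else v), ?_⟩, ?_⟩
    · rintro (a|a) (b|b) h
      · exact congrArg Sum.inl ((f _).injective h)
      · simp only [Sum.elim_inl, Sum.elim_inr] at h
        split_ifs at h
        · exact absurd h (hku a)
        · exact absurd h (hkv a)
      · simp only [Sum.elim_inl, Sum.elim_inr] at h
        split_ifs at h
        · exact absurd h.symm (hku b)
        · exact absurd h.symm (hkv b)
      · simp only [Sum.elim_inr] at h
        congr 1
        fin_cases a <;> fin_cases b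
        · rfl
        · exact absurd (show u = v by simpa using h) huv.ne
        · exact absurd (show u = v by simpa using h.symm) huv.ne
        · rfl
    · rintro (a|a) (b|b) hab
      · exact hf _ a b hab
      · simp [SimpleGraph.sum] at hab
      · simp [SimpleGraph.sum] at hab
      · have hne2 : a ≠ b := hab
        fin_cases a <;> fin_cases b
        · exact absurd rfl hne2
        · exact ⟨huv, rfl⟩
        · exact ⟨huv.symm, congrArg c (Sym2.eq_swap)⟩
        · exact absurd rfl hne2
  -- distinct indices along every edge of `G`
  have hne : ∀ u v : V, G.Adj u v → kap f u ≠ kap f v := by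
    intro u v huv h
    by_cases h9 : kap f u = 9
    · have h9' : kap f v = 9 := h ▸ h9
      rcases hkey u v huv with ⟨a, ha⟩ | ⟨a, ha⟩
      · exact kap_eq_nine f u h9 _ a ha
      · exact kap_eq_nine f v h9' _ a ha
    · exact huv.ne (kap_inj f u v h h9)
  -- apply the Ramsey property to the pulled-back colouring of `K₁₀`
  obtain ⟨j, g, hg⟩ := hG (fun e =>
    Sym2.lift ⟨fun u v => dtab (kap f u) (kap f v), fun u v => dtab_symm _ _⟩ e)
  have h01 := hg 0 1 (by simp)
  have h02 := hg 0 2 (by simp)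
  have h12 := hg 1 2 (by simp)
  simp only [Sym2.lift_mk] at h01 h02 h12
  exact dtab_noMono (kap f (g 0)) (kap f (g 1)) (kap f (g 2))
    (hne _ _ h01.1) (hne _ _ h02.1) (hne _ _ h12.1)
    ⟨h01.2.trans h02.2.symm, h01.2.trans h12.2.symm⟩
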